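/- Let V, W, Z be finite-dimensional real vector spaces, Γ ⊆ V ⊕ W and Φ ⊆ W ⊕ Z subspaces, and Φ∘Γ = {(v,z) ∈ V ⊕ Z : ∃ w ∈ W with (v,w) ∈ Γ and (w,z) ∈ Φ} their composition. Then for (f,h) ∈ V* ⊕ Z*, one has (f,h) ∈ Ann(Φ∘Γ) if and only if there exists g ∈ W* such that (f,g) ∈ Ann(Γ) and (-g,h) ∈ Ann(Φ). -/

import Mathlib

open Module LinearMap

section Comp

variable {V W Z : Type*} [AddCommGroup V] [Module ℝ V] [AddCommGroup W] [Module ℝ W]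
  [AddCommGroup Z] [Module ℝ Z]

/-- The composition `Φ∘Γ = {(v,z) : ∃ w, (v,w) ∈ Γ ∧ (w,z) ∈ Φ}` of linear relations. -/
def relComp (Γ : Submodule ℝ (V × W)) (Φ : Submodule ℝ (W × Z)) : Submodule ℝ (V × Z) where
  carrier := {p | ∃ w : W, (p.1, w) ∈ Γ ∧ (w, p.2) ∈ Φ}
  add_mem' := by
    rintro ⟨a, c⟩ ⟨a', c'⟩ ⟨w, h1, h2⟩ ⟨w', h1', h2'⟩
    exact ⟨w + w', Γ.add_mem h1 h1', Φ.add_mem h2 h2'⟩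
  zero_mem' := ⟨0, Γ.zero_mem, Φ.zero_mem⟩
  smul_mem' := by
    rintro r ⟨a, c⟩ ⟨w, h1, h2⟩
    exact ⟨r • w, Γ.smul_mem r h1, Φ.smul_mem r h2⟩

end Comp

theorem mem_dualAnnihilator_relComp_iff
    (V W Z : Type*) [AddCommGroup V] [Module ℝ V] [FiniteDimensional ℝ V]
    [AddCommGroup W] [Module ℝ W] [FiniteDimensional ℝ W]
    [AddCommGroup Z] [Module ℝ Z] [FiniteDimensional ℝ Z]
    (Γ : Submodule ℝ (V × W)) (Φ : Submodule ℝ (W × Z))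
    (f : Module.Dual ℝ V) (h : Module.Dual ℝ Z) :
    Module.dualProdDualEquivDual ℝ V Z (f, h) ∈ (relComp Γ Φ).dualAnnihilator ↔
      ∃ g : Module.Dual ℝ W,
        Module.dualProdDualEquivDual ℝ V W (f, g) ∈ Γ.dualAnnihilator ∧
        Module.dualProdDualEquivDual ℝ W Z (-g, h) ∈ Φ.dualAnnihilator := by
  constructor
  · intro H
    -- Set up the big space and maps
    set X := (V × W) × (W × Z)
    let d : X →ₗ[ℝ] W :=
      (LinearMap.snd ℝ V W).comp (LinearMap.fst ℝ (V × W) (W × Z)) -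
        (LinearMap.fst ℝ W Z).comp (LinearMap.snd ℝ (V × W) (W × Z))
    let q : X →ₗ[ℝ] V × Z :=
      ((LinearMap.fst ℝ V W).comp (LinearMap.fst ℝ (V × W) (W × Z))).prod
        ((LinearMap.snd ℝ W Z).comp (LinearMap.snd ℝ (V × W) (W × Z)))
    let F : Module.Dual ℝ X := q.dualMap (Module.dualProdDualEquivDual ℝ V Z (f, h))
    have hF : F ∈ ((Γ.prod Φ) ⊓ LinearMap.ker d).dualAnnihilator := by
      rw [Submodule.mem_dualAnnihilator]
      rintro ⟨⟨v, w⟩, ⟨w', z⟩⟩ ⟨⟨h1, h2⟩, hk⟩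
      have hw : w = w' := by
        have hk2 := LinearMap.mem_ker.mp hk
        simpa [d, sub_eq_zero] using hk2
      rw [Submodule.mem_dualAnnihilator] at H
      exact H (v, z) ⟨w, h1, hw ▸ h2⟩
    rw [Subspace.dualAnnihilator_inf_eq, Submodule.mem_sup] at hF
    obtain ⟨α, hα, β, hβ, hsum⟩ := hF
    have hβ' : β ∈ LinearMap.range d.dualMap := by
      rw [LinearMap.range_dualMap_eq_dualAnnihilator_ker]
      exact hβ
    obtain ⟨g, rfl⟩ := hβ'
    refine ⟨-g, ?_, ?_⟩
    · rw [Submodule.mem_dualAnnihilator]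
      rintro ⟨v, w⟩ hvw
      have hx : ((v, w), ((0 : W), (0 : Z))) ∈ Γ.prod Φ := ⟨hvw, Φ.zero_mem⟩
      have := (Submodule.mem_dualAnnihilator _).mp hα _ hx
      have hs := DFunLike.congr_fun hsum ((v, w), ((0 : W), (0 : Z)))
      simp only [F, q, d, LinearMap.add_apply, LinearMap.dualMap_apply,
        Module.dualProdDualEquivDual_apply, LinearMap.coprod_apply, LinearMap.prod_apply,
        LinearMap.comp_apply, LinearMap.fst_apply, LinearMap.snd_apply, LinearMap.sub_apply,
        Pi.prod, Function.prod, map_zero, map_sub, add_zero, sub_zero, map_neg, LinearMap.neg_apply] at this hs ⊢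
      linarith
    · rw [Submodule.mem_dualAnnihilator]
      rintro ⟨w', z⟩ hwz
      have hx : (((0 : V), (0 : W)), (w', z)) ∈ Γ.prod Φ := ⟨Γ.zero_mem, hwz⟩
      have := (Submodule.mem_dualAnnihilator _).mp hα _ hx
      have hs := DFunLike.congr_fun hsum (((0 : V), (0 : W)), (w', z))
      simp only [F, q, d, LinearMap.add_apply, LinearMap.dualMap_apply,
        Module.dualProdDualEquivDual_apply, LinearMap.coprod_apply, LinearMap.prod_apply,
        LinearMap.comp_apply, LinearMap.fst_apply, LinearMap.snd_apply, LinearMap.sub_apply,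
        Pi.prod, Function.prod, map_zero, map_sub, zero_add, zero_sub, map_neg, neg_neg, LinearMap.neg_apply] at this hs ⊢
      linarith
  · rintro ⟨g, hg, hg'⟩
    rw [Submodule.mem_dualAnnihilator]
    rintro ⟨v, z⟩ ⟨w, h1, h2⟩
    have e1 := (Submodule.mem_dualAnnihilator _).mp hg _ h1
    have e2 := (Submodule.mem_dualAnnihilator _).mp hg' _ h2
    simp only [Module.dualProdDualEquivDual_apply, LinearMap.coprod_apply,
      LinearMap.neg_apply] at e1 e2 ⊢
    linarith
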